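/- Let k ≥ 3 and 2 ≤ D ≤ k be integers, let Ω be the soliton distribution with maximum degree D. Let s be an integer with 1 ≤ s ≤ k/2 such that ⌈κ(s)⌉ ≤ 3, and let n be an integer with n ≥ 35k. Then C(k,s)·e^{−nΣ_s} ≤ 2^k·e^{−k}. -/

import Mathlib

open Finset Real

/-- The soliton distribution with maximum degree `D`:
`Ω_1 = 1/D`, `Ω_d = 1/(d(d−1))` for `2 ≤ d ≤ D`, and `Ω_d = 0` otherwise. -/
noncomputable def soliton (D d : ℕ) : ℝ :=
  if d = 1 then 1 / (D : ℝ)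
  else if 2 ≤ d ∧ d ≤ D then 1 / ((d : ℝ) * ((d : ℝ) - 1))
  else 0

/-- `⌈κ(s)⌉` where `κ(s) = (k−s+1)/(2s+1)`. -/
noncomputable def kappaCeil (k s : ℕ) : ℕ := ⌈(((k : ℝ) - s + 1) / (2 * s + 1))⌉₊

/-- `Σ_s = (1/5)·Σ_{d=⌈κ(s)⌉}^{k−⌈κ(s)⌉} Ω_d
      + (2s/5)·( Σ_{d=1}^{⌈κ(s)⌉−1} d·Ω_d/(k−d+1)
               + Σ_{d=k−⌈κ(s)⌉+1}^{k} (k−d)·Ω_d/(d+1) )`. -/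
noncomputable def SigmaS (k : ℕ) (Ω : ℕ → ℝ) (s : ℕ) : ℝ :=
  (1 / 5) * (∑ d ∈ Finset.Icc (kappaCeil k s) (k - kappaCeil k s), Ω d) +
    (2 * s / 5) *
      ((∑ d ∈ Finset.Icc 1 (kappaCeil k s - 1), (d : ℝ) * Ω d / ((k : ℝ) - d + 1)) +
        ∑ d ∈ Finset.Icc (k - kappaCeil k s + 1) k, ((k : ℝ) - d) * Ω d / ((d : ℝ) + 1))

lemma tele : ∀ m : ℕ, 1 ≤ m → ∑ d ∈ Finset.Icc 2 m, (1 / ((d:ℝ) * ((d:ℝ) - 1))) = 1 - 1/(m:ℝ) := by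
  intro m hm
  induction m with
  | zero => omega
  | succ n ih =>
    rcases Nat.eq_or_lt_of_le hm with h | h
    · simp [← h]
    · have hn : 1 ≤ n := by omega
      rw [Finset.sum_Icc_succ_top (by omega), ih hn]
      have h0 : (n:ℝ) ≠ 0 := by positivity
      have h1 : (n:ℝ) + 1 ≠ 0 := by positivity
      push_cast
      field_simp
      ring_nf
      rw [mul_inv_cancel₀ h0]
      ring

lemma soliton_nonneg (D d : ℕ) : 0 ≤ soliton D d := by
  unfold soliton
  split_ifs with h1 h2
  · positivity
  · have h2' : (2:ℝ) ≤ (d:ℝ) := by exact_mod_cast h2.1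
    have : (0:ℝ) < (d:ℝ) * ((d:ℝ) - 1) := by nlinarith
    positivity
  · exact le_refl 0

-- sum of soliton over Icc 1 (k-1)
lemma soliton_sum_lb (k D : ℕ) (hk : 3 ≤ k) (hD2 : 2 ≤ D) (hDk : D ≤ k) :
    1 - 1/((k:ℝ) * ((k:ℝ) - 1)) ≤ ∑ d ∈ Finset.Icc 1 (k-1), soliton D d := by
  set m := min D (k-1) with hm
  have hm2 : 2 ≤ m := by omega
  have hmk : m ≤ k - 1 := by omega
  have e1 : ∑ d ∈ Finset.Ioc 0 1, soliton D d + ∑ d ∈ Finset.Ioc 1 (k-1), soliton D d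
      = ∑ d ∈ Finset.Ioc 0 (k-1), soliton D d :=
    Finset.sum_Ioc_consecutive _ (by omega) (by omega)
  have e2 : ∑ d ∈ Finset.Ioc 1 m, soliton D d + ∑ d ∈ Finset.Ioc m (k-1), soliton D d
      = ∑ d ∈ Finset.Ioc 1 (k-1), soliton D d :=
    Finset.sum_Ioc_consecutive _ (by omega) hmk
  have hzero : ∑ d ∈ Finset.Ioc m (k-1), soliton D d = 0 := by
    apply Finset.sum_eq_zero
    intro d hd
    rw [Finset.mem_Ioc] at hd
    have hdD : D < d := by omega
    unfold soliton
    rw [if_neg (by omega), if_neg (by omega)]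
  have hmid : ∑ d ∈ Finset.Ioc 1 m, soliton D d = 1 - 1/(m:ℝ) := by
    rw [show Finset.Ioc 1 m = Finset.Icc 2 m from (Finset.Icc_add_one_left_eq_Ioc 1 m).symm]
    rw [← tele m (by omega)]
    apply Finset.sum_congr rfl
    intro d hd
    rw [Finset.mem_Icc] at hd
    unfold soliton
    rw [if_neg (by omega), if_pos (by omega)]
  have hone : ∑ d ∈ Finset.Ioc 0 1, soliton D d = 1/(D:ℝ) := by
    rw [show Finset.Ioc 0 1 = {1} from rfl, Finset.sum_singleton]
    unfold soliton
    rw [if_pos rfl]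
  have hIcc : Finset.Icc 1 (k-1) = Finset.Ioc 0 (k-1) := Finset.Icc_add_one_left_eq_Ioc 0 (k-1)
  rw [hIcc, ← e1, hone, ← e2, hzero, hmid]
  have hkR : (3:ℝ) ≤ (k:ℝ) := by exact_mod_cast hk
  rcases le_or_gt D (k-1) with hcase | hcase
  · have : m = D := by omega
    rw [this]
    have hD0 : (D:ℝ) ≠ 0 := by positivity
    have : 1/(D:ℝ) + (1 - 1/(D:ℝ) + 0) = 1 := by ring
    rw [this]
    have : 0 < (k:ℝ) * ((k:ℝ) - 1) := by nlinarith
    have : 0 ≤ 1/((k:ℝ) * ((k:ℝ)-1)) := by positivity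
    linarith
  · have hDeq : D = k := by omega
    have : m = k - 1 := by omega
    rw [this, hDeq]
    have hcast : ((k-1 : ℕ):ℝ) = (k:ℝ) - 1 := by
      push_cast [Nat.cast_sub (by omega : 1 ≤ k)]; ring
    rw [hcast]
    have h1 : (0:ℝ) < (k:ℝ) := by linarith
    have h2 : (0:ℝ) < (k:ℝ) - 1 := by linarith
    have key : 1/(k:ℝ) + (1 - 1/((k:ℝ)-1) + 0) = 1 - 1/((k:ℝ)*((k:ℝ)-1)) := by
      field_simp
      ring
    rw [key]

lemma sigma_lb (k D s : ℕ) (hk : 3 ≤ k) (hs1 : 1 ≤ s)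
    (hκ1 : 1 ≤ kappaCeil k s) (h2κ : 2 * kappaCeil k s ≤ k) (hk14 : k ≤ 14 * s) :
    1/35 * ∑ d ∈ Finset.Icc 1 (k-1), soliton D d ≤ SigmaS k (soliton D) s := by
  set κ := kappaCeil k s with hκdef
  have hk14R : (k:ℝ) ≤ 14 * s := by exact_mod_cast hk14
  have hs1R : (1:ℝ) ≤ s := by exact_mod_cast hs1
  have sA : ∑ d ∈ Finset.Ioc 0 (κ-1), (1/35 : ℝ) * soliton D d
      + ∑ d ∈ Finset.Ioc (κ-1) (k-κ), (1/35 : ℝ) * soliton D d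
      = ∑ d ∈ Finset.Ioc 0 (k-κ), (1/35 : ℝ) * soliton D d :=
    Finset.sum_Ioc_consecutive _ (by omega) (by omega)
  have sB : ∑ d ∈ Finset.Ioc 0 (k-κ), (1/35 : ℝ) * soliton D d
      + ∑ d ∈ Finset.Ioc (k-κ) (k-1), (1/35 : ℝ) * soliton D d
      = ∑ d ∈ Finset.Ioc 0 (k-1), (1/35 : ℝ) * soliton D d :=
    Finset.sum_Ioc_consecutive _ (by omega) (by omega)
  have hA_index : Finset.Icc 1 (κ-1) = Finset.Ioc 0 (κ-1) := Finset.Icc_add_one_left_eq_Ioc 0 (κ-1)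
  have hB_index : Finset.Icc κ (k-κ) = Finset.Ioc (κ-1) (k-κ) := by
    rw [← Finset.Icc_add_one_left_eq_Ioc]; congr 1; omega
  have hC_index : Finset.Icc (k-κ+1) k = Finset.Ioc (k-κ) k := Finset.Icc_add_one_left_eq_Ioc (k-κ) k
  have splitC : ∑ d ∈ Finset.Ioc (k-κ) (k-1), ((k : ℝ) - d) * soliton D d / ((d : ℝ) + 1)
      + ∑ d ∈ Finset.Ioc (k-1) k, ((k : ℝ) - d) * soliton D d / ((d : ℝ) + 1)
      = ∑ d ∈ Finset.Ioc (k-κ) k, ((k : ℝ) - d) * soliton D d / ((d : ℝ) + 1) :=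
    Finset.sum_Ioc_consecutive _ (by omega) (by omega)
  have lastzero : ∑ d ∈ Finset.Ioc (k-1) k, ((k : ℝ) - d) * soliton D d / ((d : ℝ) + 1) = 0 := by
    have hset : Finset.Ioc (k-1) k = {k} := by
      ext x; simp only [Finset.mem_Ioc, Finset.mem_singleton]; omega
    rw [hset, Finset.sum_singleton]
    simp
  -- termwise bounds
  have T1 : ∑ d ∈ Finset.Ioc 0 (κ-1), (1/35 : ℝ) * soliton D d
      ≤ 2 * (s:ℝ) / 5 * ∑ d ∈ Finset.Ioc 0 (κ-1), (d : ℝ) * soliton D d / ((k : ℝ) - d + 1) := by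
    rw [Finset.mul_sum]
    apply Finset.sum_le_sum
    intro d hd
    rw [Finset.mem_Ioc] at hd
    have hΩ := soliton_nonneg D d
    have hd1 : (1:ℝ) ≤ d := by exact_mod_cast hd.1
    have hdk : 2 * (d:ℝ) ≤ k := by
      have : 2 * d ≤ k := by omega
      exact_mod_cast this
    have hpos : (0:ℝ) < (k:ℝ) - d + 1 := by linarith
    have coef : (1:ℝ)/35 ≤ 2 * s * d / (5 * ((k:ℝ) - d + 1)) := by
      rw [div_le_div_iff₀ (by norm_num) (by positivity)]
      nlinarith [mul_le_mul_of_nonneg_left hd1 (by positivity : (0:ℝ) ≤ 70 * (s:ℝ))]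
    calc (1:ℝ)/35 * soliton D d ≤ (2 * s * d / (5 * ((k:ℝ) - d + 1))) * soliton D d :=
          mul_le_mul_of_nonneg_right coef hΩ
      _ = 2 * (s:ℝ) / 5 * ((d : ℝ) * soliton D d / ((k : ℝ) - d + 1)) := by
          have hne : ((k:ℝ) - d + 1) ≠ 0 := ne_of_gt hpos
          field_simp
  have T2 : ∑ d ∈ Finset.Ioc (κ-1) (k-κ), (1/35 : ℝ) * soliton D d
      ≤ 1 / 5 * ∑ d ∈ Finset.Ioc (κ-1) (k-κ), soliton D d := by
    rw [Finset.mul_sum]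
    apply Finset.sum_le_sum
    intro d _
    have hΩ := soliton_nonneg D d
    linarith
  have T3 : ∑ d ∈ Finset.Ioc (k-κ) (k-1), (1/35 : ℝ) * soliton D d
      ≤ 2 * (s:ℝ) / 5 * ∑ d ∈ Finset.Ioc (k-κ) (k-1), ((k : ℝ) - d) * soliton D d / ((d : ℝ) + 1) := by
    rw [Finset.mul_sum]
    apply Finset.sum_le_sum
    intro d hd
    rw [Finset.mem_Ioc] at hd
    have hΩ := soliton_nonneg D d
    have hd1 : (d:ℝ) + 1 ≤ k := by
      have : d + 1 ≤ k := by omega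
      exact_mod_cast this
    have hkd : (1:ℝ) ≤ (k:ℝ) - d := by linarith
    have hdpos : (0:ℝ) < (d:ℝ) + 1 := by positivity
    have coef : (1:ℝ)/35 ≤ 2 * s * ((k:ℝ) - d) / (5 * ((d:ℝ) + 1)) := by
      rw [div_le_div_iff₀ (by norm_num) (by positivity)]
      nlinarith [mul_le_mul_of_nonneg_left hkd (by positivity : (0:ℝ) ≤ 70 * (s:ℝ))]
    calc (1:ℝ)/35 * soliton D d ≤ (2 * s * ((k:ℝ) - d) / (5 * ((d:ℝ) + 1))) * soliton D d :=
          mul_le_mul_of_nonneg_right coef hΩ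
      _ = 2 * (s:ℝ) / 5 * (((k : ℝ) - d) * soliton D d / ((d : ℝ) + 1)) := by
          have hne : ((d:ℝ) + 1) ≠ 0 := ne_of_gt hdpos
          field_simp
  -- assemble
  unfold SigmaS
  rw [← hκdef, hA_index, hB_index, hC_index]
  rw [show Finset.Icc 1 (k-1) = Finset.Ioc 0 (k-1) from Finset.Icc_add_one_left_eq_Ioc 0 (k-1)]
  rw [Finset.mul_sum, ← sB, ← sA, ← splitC, lastzero, add_zero, mul_add]
  linarith

lemma choose_le_two_pow_pred (k s : ℕ) (h1 : 1 ≤ s) (h2 : 2 * s ≤ k) (hk : 3 ≤ k) :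
    k.choose s ≤ 2 ^ (k - 1) := by
  set m := k - 1 with hm
  set t := s - 1 with ht
  have hks : k = m + 1 := by omega
  have hst : s = t + 1 := by omega
  have hchoose : k.choose s = m.choose t + m.choose (t + 1) := by
    rw [hks, hst, Nat.choose_succ_succ]
  have hpair : ({t, t + 1} : Finset ℕ) ⊆ Finset.range (m + 1) := by
    intro x hx
    simp only [Finset.mem_insert, Finset.mem_singleton] at hx
    rw [Finset.mem_range]
    omega
  have hsum : m.choose t + m.choose (t + 1) = ∑ j ∈ ({t, t + 1} : Finset ℕ), m.choose j := by
    rw [Finset.sum_pair (by omega : t ≠ t + 1)]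
  calc k.choose s = ∑ j ∈ ({t, t + 1} : Finset ℕ), m.choose j := by rw [hchoose, hsum]
    _ ≤ ∑ j ∈ Finset.range (m + 1), m.choose j :=
        Finset.sum_le_sum_of_subset hpair
    _ = 2 ^ m := Nat.sum_range_choose m

theorem stmt5 (k D : ℕ) (hk : 3 ≤ k) (hD2 : 2 ≤ D) (hDk : D ≤ k)
    (s : ℕ) (hs1 : 1 ≤ s) (hs2 : 2 * s ≤ k) (hκ : kappaCeil k s ≤ 3)
    (n : ℕ) (hn : 35 * k ≤ n) :
    (k.choose s : ℝ) * Real.exp (-(n : ℝ) * SigmaS k (soliton D) s) ≤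
      (2 : ℝ) ^ k * Real.exp (-(k : ℝ)) := by
  have hκ1 : 1 ≤ kappaCeil k s := by
    rw [kappaCeil]
    apply Nat.one_le_iff_ne_zero.mpr
    intro h
    have hle := Nat.ceil_eq_zero.mp h
    have hsk : (s:ℝ) ≤ k := by exact_mod_cast (by omega : s ≤ k)
    have : (0:ℝ) < 2 * (s:ℝ) + 1 := by positivity
    have := div_pos (by linarith : (0:ℝ) < (k : ℝ) - s + 1) this
    linarith
  have hk7 : k ≤ 7 * s + 2 := by
    have h3 : ((k : ℝ) - s + 1) / (2 * s + 1) ≤ 3 := by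
      have h := Nat.ceil_le.mp (show kappaCeil k s ≤ 3 from hκ)
      exact_mod_cast h
    have hpos : (0:ℝ) < 2 * (s:ℝ) + 1 := by positivity
    rw [div_le_iff₀ hpos] at h3
    have : (k:ℝ) ≤ 7 * s + 2 := by linarith
    exact_mod_cast this
  have h2κ : 2 * kappaCeil k s ≤ k := by
    have hcases : kappaCeil k s = 1 ∨ kappaCeil k s = 2 ∨ kappaCeil k s = 3 := by omega
    rcases hcases with h | h | h
    · omega
    · have h1 : (1:ℝ) < ((k : ℝ) - s + 1) / (2 * s + 1) := by
        have := Nat.lt_ceil.mp (show 1 < kappaCeil k s by omega)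
        exact_mod_cast this
      have hpos : (0:ℝ) < 2 * (s:ℝ) + 1 := by positivity
      rw [lt_div_iff₀ hpos] at h1
      have hs' : (1:ℝ) ≤ s := by exact_mod_cast hs1
      have : (3:ℝ) < (k:ℝ) := by nlinarith
      have : 3 < k := by exact_mod_cast this
      omega
    · have h1 : (2:ℝ) < ((k : ℝ) - s + 1) / (2 * s + 1) := by
        have := Nat.lt_ceil.mp (show 2 < kappaCeil k s by omega)
        exact_mod_cast this
      have hpos : (0:ℝ) < 2 * (s:ℝ) + 1 := by positivity
      rw [lt_div_iff₀ hpos] at h1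
      have hs' : (1:ℝ) ≤ s := by exact_mod_cast hs1
      have : (6:ℝ) < (k:ℝ) := by nlinarith
      have : 6 < k := by exact_mod_cast this
      omega
  have hk14 : k ≤ 14 * s := by omega
  have hkR : (3:ℝ) ≤ (k:ℝ) := by exact_mod_cast hk
  have hS := sigma_lb k D s hk hs1 hκ1 h2κ hk14
  have hS1 := soliton_sum_lb k D hk hD2 hDk
  have hSlb : 1/35 * (1 - 1/((k:ℝ) * ((k:ℝ) - 1))) ≤ SigmaS k (soliton D) s := by
    refine le_trans ?_ hS
    linarith
  have hk0 : (k:ℝ) ≠ 0 := by linarith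
  have hk1 : (k:ℝ) - 1 ≠ 0 := by intro h; nlinarith
  have hnn : (0:ℝ) ≤ 1/35 * (1 - 1/((k:ℝ) * ((k:ℝ) - 1))) := by
    have h6 : (6:ℝ) ≤ (k:ℝ) * ((k:ℝ) - 1) := by nlinarith
    have : (1:ℝ)/((k:ℝ) * ((k:ℝ) - 1)) ≤ 1 := by
      rw [div_le_one (by linarith)]; linarith
    linarith
  have hprod : (k:ℝ) - 1/((k:ℝ) - 1) ≤ (n:ℝ) * SigmaS k (soliton D) s := by
    have hn' : (35:ℝ) * k ≤ n := by exact_mod_cast hn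
    calc (k:ℝ) - 1/((k:ℝ) - 1)
        = (35 * (k:ℝ)) * (1/35 * (1 - 1/((k:ℝ) * ((k:ℝ) - 1)))) := by
          field_simp
      _ ≤ (n:ℝ) * SigmaS k (soliton D) s :=
          mul_le_mul hn' hSlb hnn (by positivity)
  have hexp : Real.exp (-(n : ℝ) * SigmaS k (soliton D) s) ≤ 2 * Real.exp (-(k:ℝ)) := by
    have hlog : 1/((k:ℝ) - 1) ≤ Real.log 2 := by
      have h2 : 1/((k:ℝ) - 1) ≤ 1/2 :=
        one_div_le_one_div_of_le (by norm_num) (by linarith)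
      have := Real.log_two_gt_d9
      linarith
    have harg : -(n : ℝ) * SigmaS k (soliton D) s ≤ -(k:ℝ) + Real.log 2 := by
      have : -((n:ℝ) * SigmaS k (soliton D) s) ≤ -((k:ℝ) - 1/((k:ℝ) - 1)) := by linarith
      calc -(n : ℝ) * SigmaS k (soliton D) s = -((n:ℝ) * SigmaS k (soliton D) s) := by ring
        _ ≤ -((k:ℝ) - 1/((k:ℝ) - 1)) := this
        _ = -(k:ℝ) + 1/((k:ℝ) - 1) := by ring
        _ ≤ -(k:ℝ) + Real.log 2 := by linarith
    calc Real.exp (-(n : ℝ) * SigmaS k (soliton D) s) ≤ Real.exp (-(k:ℝ) + Real.log 2) :=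
          Real.exp_le_exp.mpr harg
      _ = 2 * Real.exp (-(k:ℝ)) := by
          rw [Real.exp_add, Real.exp_log two_pos]; ring
  have hC : (k.choose s : ℝ) ≤ (2:ℝ) ^ (k - 1) := by
    have := choose_le_two_pow_pred k s hs1 hs2 hk
    exact_mod_cast this
  calc (k.choose s : ℝ) * Real.exp (-(n : ℝ) * SigmaS k (soliton D) s)
      ≤ (2:ℝ) ^ (k - 1) * (2 * Real.exp (-(k:ℝ))) :=
        mul_le_mul hC hexp (Real.exp_pos _).le (by positivity)
    _ = (2:ℝ) ^ k * Real.exp (-(k:ℝ)) := by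
        rw [← mul_assoc, ← pow_succ, show k - 1 + 1 = k from by omega]
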